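/- Let σ, ρ, ω be real numbers with 0 < σ < 1, and for y > 0 set g(y) = y^{-iω/2} · Σ_{n=1}^∞ (-1)^{n+1} (n·y)^{-iω/2} (n·y)^{-σ+iρ}. Then for every real x > 0, the series x^{iω/2} · Σ_{m=1}^∞ (-1)^{m+1} m^{-1} (x/m)^{iω/2} · g(x/m) converges (as the limit of its partial sums) and its sum equals (1 - 2^{σ-i(ρ-ω/2)}) · (1 - 2^{(1-σ)+i(ρ-ω/2)}) · ζ(σ - i(ρ - ω/2)) · ζ(1 - σ + i(ρ - ω/2)) · x^{-σ+iρ}. -/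

import Mathlib

open Filter Finset Complex


noncomputable def etaPair (s : ℂ) (k : ℕ) : ℂ :=
  (((2*k+1 : ℕ) : ℂ)) ^ (-s) - (((2*k+2 : ℕ) : ℂ)) ^ (-s)

lemma hasDerivAt_cpow_neg (s : ℂ) (hs : s ≠ 0) {x : ℝ} (hx : 0 < x) :
    HasDerivAt (fun t : ℝ => (t:ℂ) ^ (-s)) (-s * (x:ℂ) ^ (-s-1)) x := by
  have h := hasDerivAt_ofReal_cpow_const' (x := x) (ne_of_gt hx) (r := -s-1)
    (by intro h; apply hs; have := congrArg (· + 1) h; simpa using this)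
  have h2 := h.const_mul (-s)
  have e1 : (fun y : ℝ => -s * ((y:ℂ) ^ (-s-1+1) / (-s-1+1))) = fun y : ℝ => (y:ℂ) ^ (-s) := by
    funext y
    have : (-s-1+1 : ℂ) = -s := by ring
    rw [this]
    field_simp [neg_ne_zero.mpr hs]
  rw [e1] at h2
  convert h2 using 1

lemma cpow_diff_bound {s : ℂ} (hs : 0 < s.re) {a : ℝ} (ha : 1 ≤ a) :
    ‖((a:ℂ)) ^ (-s) - ((a+1:ℝ):ℂ) ^ (-s)‖ ≤ ‖s‖ * a ^ (-s.re - 1) := by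
  have hs0 : s ≠ 0 := by intro h; rw [h] at hs; simp at hs
  have ha0 : 0 < a := lt_of_lt_of_le one_pos ha
  have key := Convex.norm_image_sub_le_of_norm_hasDerivWithin_le
    (f := fun t : ℝ => (t:ℂ) ^ (-s)) (f' := fun t : ℝ => -s * (t:ℂ) ^ (-s-1))
    (C := ‖s‖ * a ^ (-s.re - 1)) (s := Set.Icc a (a+1))
    (fun x hx => ((hasDerivAt_cpow_neg s hs0 (lt_of_lt_of_le ha0 hx.1)).hasDerivWithinAt))
    (fun x hx => by
      have hx0 : 0 < x := lt_of_lt_of_le ha0 hx.1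
      rw [norm_mul, norm_neg]
      gcongr
      rw [norm_cpow_eq_rpow_re_of_pos hx0]
      have : (-s-1).re = -s.re - 1 := by simp
      rw [this]
      exact Real.rpow_le_rpow_of_nonpos ha0 hx.1 (by linarith))
    (convex_Icc _ _) (Set.left_mem_Icc.2 (by linarith)) (Set.right_mem_Icc.2 (by linarith))
  calc ‖(a:ℂ) ^ (-s) - ((a+1:ℝ):ℂ) ^ (-s)‖
      = ‖((a+1:ℝ):ℂ) ^ (-s) - (a:ℂ) ^ (-s)‖ := by rw [norm_sub_rev]
    _ ≤ ‖s‖ * a ^ (-s.re - 1) * ‖(a+1) - a‖ := key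
    _ = ‖s‖ * a ^ (-s.re - 1) := by simp

lemma etaPair_bound {s : ℂ} (hs : 0 < s.re) {δ : ℝ} (hδ : 0 < δ) (hδs : δ ≤ s.re) (k : ℕ) :
    ‖etaPair s k‖ ≤ ‖s‖ * ((k:ℝ)+1) ^ (-δ - 1) := by
  have h1 : (1:ℝ) ≤ (2*k+1 : ℕ) := by exact_mod_cast Nat.succ_le_succ (Nat.zero_le _)
  have hb := cpow_diff_bound hs (a := ((2*k+1 : ℕ):ℝ)) h1
  have e : (((2*k+1:ℕ):ℝ) + 1 : ℝ) = ((2*k+2 : ℕ):ℝ) := by push_cast; ring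
  rw [e] at hb
  refine le_trans (le_of_eq ?_) (le_trans hb ?_)
  · rw [etaPair]; norm_cast
  · have hk1 : (1:ℝ) ≤ (k:ℝ)+1 := le_add_of_nonneg_left (Nat.cast_nonneg k)
    refine mul_le_mul_of_nonneg_left ?_ (norm_nonneg s)
    calc ((2*k+1:ℕ):ℝ) ^ (-s.re - 1) ≤ ((k:ℝ)+1) ^ (-s.re-1) := by
          apply Real.rpow_le_rpow_of_nonpos (by positivity) (by push_cast; linarith) (by linarith)
      _ ≤ ((k:ℝ)+1) ^ (-δ-1) := by
          apply Real.rpow_le_rpow_of_exponent_le hk1 (by linarith)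

lemma summable_aux {δ : ℝ} (hδ : 0 < δ) (C : ℝ) :
    Summable (fun k : ℕ => C * ((k:ℝ)+1) ^ (-δ - 1)) := by
  apply Summable.mul_left
  have h : Summable (fun k : ℕ => ((k:ℝ)) ^ (-δ - 1)) := by
    rw [Real.summable_nat_rpow]
    linarith
  have := (summable_nat_add_iff (f := fun k : ℕ => ((k:ℝ)) ^ (-δ - 1)) 1).2 h
  simpa using this

noncomputable def etaF (s : ℂ) : ℂ := ∑' k, etaPair s k

lemma hasSum_etaPair {s : ℂ} (hs : 0 < s.re) : HasSum (etaPair s) (etaF s) := by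
  apply Summable.hasSum
  apply Summable.of_norm_bounded (summable_aux hs ‖s‖)
  exact etaPair_bound hs hs le_rfl

lemma sum_range_two_mul (s : ℂ) (K : ℕ) :
    ∑ n ∈ Finset.range (2*K), (-1:ℂ)^n * ((n+1 : ℕ) : ℂ) ^ (-s)
      = ∑ k ∈ Finset.range K, etaPair s k := by
  induction K with
  | zero => simp
  | succ K ih =>
    have : 2*(K+1) = (2*K) + 1 + 1 := by ring
    rw [this, Finset.sum_range_succ, Finset.sum_range_succ, ih, Finset.sum_range_succ]
    have e1 : (-1:ℂ) ^ (2*K) = 1 := by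
      rw [pow_mul]; norm_num
    have e2 : (-1:ℂ) ^ (2*K+1) = -1 := by
      rw [pow_succ, e1]; ring
    rw [e1, e2, etaPair]
    have : 2*K+1+1 = 2*K+2 := by ring
    rw [this]
    ring

lemma term_tendsto_zero {s : ℂ} (hs : 0 < s.re) :
    Tendsto (fun n : ℕ => (-1:ℂ)^n * ((n+1 : ℕ) : ℂ) ^ (-s)) atTop (nhds 0) := by
  rw [tendsto_zero_iff_norm_tendsto_zero]
  have he : ∀ n : ℕ, ‖(-1:ℂ)^n * ((n+1 : ℕ) : ℂ) ^ (-s)‖ = ((n:ℝ)+1) ^ (-s.re) := by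
    intro n
    rw [norm_mul]
    have : ‖(-1:ℂ)^n‖ = 1 := by simp
    rw [this, one_mul]
    have hp : (0:ℝ) < ((n+1:ℕ):ℝ) := by positivity
    rw [show ((n+1:ℕ):ℂ) = (((n+1:ℕ):ℝ):ℂ) by norm_cast,
      norm_cpow_eq_rpow_re_of_pos hp]
    norm_num
  simp only [he]
  have h1 : Tendsto (fun n : ℕ => ((n:ℝ)+1)) atTop atTop :=
    tendsto_atTop_add_const_right _ 1 tendsto_natCast_atTop_atTop
  have := (tendsto_rpow_neg_atTop hs).comp h1
  simpa [Function.comp_def] using this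

lemma tendsto_eta {s : ℂ} (hs : 0 < s.re) :
    Tendsto (fun N : ℕ => ∑ n ∈ Finset.range N, (-1:ℂ)^n * ((n+1 : ℕ) : ℂ) ^ (-s))
      atTop (nhds (etaF s)) := by
  set F := fun N : ℕ => ∑ n ∈ Finset.range N, (-1:ℂ)^n * ((n+1 : ℕ) : ℂ) ^ (-s) with hF
  have heven : Tendsto (fun K : ℕ => F (2*K)) atTop (nhds (etaF s)) := by
    have := (hasSum_etaPair hs).tendsto_sum_nat
    simpa only [hF, sum_range_two_mul] using this
  have hodd : Tendsto (fun K : ℕ => F (2*K+1)) atTop (nhds (etaF s)) := by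
    have e : ∀ K, F (2*K+1) = F (2*K) + ((2*K+1 : ℕ) : ℂ) ^ (-s) := by
      intro K
      rw [hF]
      simp only [Finset.sum_range_succ]
      have e1 : (-1:ℂ) ^ (2*K) = 1 := by rw [pow_mul]; norm_num
      rw [e1, one_mul]
    simp only [e]
    have h2 : Tendsto (fun K : ℕ => ((2*K+1 : ℕ) : ℂ) ^ (-s)) atTop (nhds 0) := by
      have hmono : Tendsto (fun K : ℕ => 2*K) atTop atTop :=
        tendsto_atTop_atTop_of_monotone (fun a b h => by omega) (fun b => ⟨b, by omega⟩)
      have := (term_tendsto_zero hs).comp hmono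
      simp only [Function.comp_def] at this
      push_cast at this ⊢
      simpa [pow_mul] using this
    simpa using heven.add h2
  rw [Metric.tendsto_atTop] at heven hodd ⊢
  intro ε hε
  obtain ⟨N₁, h₁⟩ := heven ε hε
  obtain ⟨N₂, h₂⟩ := hodd ε hε
  refine ⟨2*(max N₁ N₂) + 2, fun n hn => ?_⟩
  rcases Nat.even_or_odd n with ⟨k, hk⟩ | ⟨k, hk⟩
  · have : n = 2*k := by omega
    rw [this]; exact h₁ k (by omega)
  · have : n = 2*k+1 := by omega
    rw [this]; exact h₂ k (by omega)

lemma summable_g {s : ℂ} (hs : 1 < s.re) :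
    Summable (fun n : ℕ => ((n+1 : ℕ) : ℂ) ^ (-s)) := by
  have h := Complex.summable_one_div_nat_cpow.2 hs
  have h2 := (summable_nat_add_iff (f := fun n : ℕ => 1 / (n:ℂ)^s) 1).2 h
  apply h2.congr
  intro n
  rw [one_div, ← Complex.cpow_neg]

lemma zeta_tsum {s : ℂ} (hs : 1 < s.re) :
    riemannZeta s = ∑' n : ℕ, ((n+1 : ℕ) : ℂ) ^ (-s) := by
  rw [zeta_eq_tsum_one_div_nat_add_one_cpow hs]
  congr 1
  funext n
  rw [one_div, ← Complex.cpow_neg]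
  norm_cast

lemma etaF_eq_of_one_lt {s : ℂ} (hs : 1 < s.re) :
    etaF s = (1 - 2 ^ ((1:ℂ) - s)) * riemannZeta s := by
  have hg := summable_g hs
  set g := fun n : ℕ => ((n+1 : ℕ) : ℂ) ^ (-s) with hgdef
  have hA : Summable (fun k : ℕ => g (2*k)) := hg.comp_injective (fun a b => by omega)
  have hB : Summable (fun k : ℕ => g (2*k+1)) := hg.comp_injective (fun a b => by omega)
  set A := ∑' k : ℕ, g (2*k) with hAdef
  set B := ∑' k : ℕ, g (2*k+1) with hBdef
  -- zeta = A + B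
  have hzeta : riemannZeta s = A + B := by
    rw [zeta_tsum hs, ← tsum_even_add_odd hA hB]
  -- etaF = A - B
  have hEta : etaF s = A - B := by
    rw [etaF, ← Summable.tsum_sub hA hB]
    congr 1
  -- B = 2^{-s} * zeta
  have hBval : B = 2 ^ (-s) * riemannZeta s := by
    rw [hBdef, zeta_tsum hs, ← tsum_mul_left]
    congr 1
    funext k
    rw [hgdef]
    simp only []
    have e : ((2*k+1+1 : ℕ) : ℂ) = ((2:ℝ):ℂ) * (((k+1:ℕ):ℝ):ℂ) := by push_cast; ring
    rw [e, mul_cpow_ofReal_nonneg (by norm_num : (0:ℝ) ≤ 2) (by positivity)]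
    norm_cast
  have h2s : (2:ℂ) ^ ((1:ℂ) - s) = 2 * 2 ^ (-s) := by
    rw [sub_eq_add_neg, Complex.cpow_add _ _ (by norm_num), Complex.cpow_one]
  have hAval : A = riemannZeta s - B := by rw [hzeta]; ring
  rw [hEta, hAval, hBval, h2s]
  ring

lemma etaF_diff : DifferentiableOn ℂ etaF {s : ℂ | 0 < s.re} := by
  have hopen : IsOpen {s : ℂ | 0 < s.re} := isOpen_lt continuous_const Complex.continuous_re
  have hlu : TendstoLocallyUniformlyOn
      (fun K : ℕ => fun s => ∑ k ∈ Finset.range K, etaPair s k) etaF atTop {s : ℂ | 0 < s.re} := by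
    rw [tendstoLocallyUniformlyOn_iff_forall_isCompact hopen]
    intro K hKsub hKc
    rcases K.eq_empty_or_nonempty with rfl | hne
    · exact tendstoUniformlyOn_empty
    · obtain ⟨C, hC⟩ := hKc.exists_bound_of_continuousOn (continuousOn_id (s := K))
      obtain ⟨z₀, hz₀K, hmin⟩ := hKc.exists_isMinOn hne (Complex.continuous_re.continuousOn)
      set δ : ℝ := z₀.re with hδdef
      have hδ : 0 < δ := hKsub hz₀K
      have := tendstoUniformlyOn_tsum_nat (f := fun k (z : ℂ) => etaPair z k)
        (summable_aux hδ C) (s := K) ?_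
      · exact this
      intro k s hsK
      have hsre : 0 < s.re := hKsub hsK
      refine le_trans (etaPair_bound hsre hδ (hmin hsK) k) ?_
      apply mul_le_mul_of_nonneg_right (hC s hsK) (Real.rpow_nonneg (by positivity) _)
  refine hlu.differentiableOn ?_ hopen
  filter_upwards with K
  apply DifferentiableOn.fun_sum
  intro k _
  apply DifferentiableOn.sub <;>
  · apply Differentiable.differentiableOn
    apply Differentiable.const_cpow (differentiable_id.neg)
    left
    exact Nat.cast_ne_zero.mpr (by omega)

lemma preconn_U : IsPreconnected {z : ℂ | 0 < z.re ∧ z ≠ 1} := by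
  set D0 : Set ℂ := {z | 0 < z.re ∧ z.re < 1} with hD0
  set D1 : Set ℂ := {z | 1 < z.re} with hD1
  set Cp : Set ℂ := {z | 0 < z.re ∧ 0 < z.im} with hCp
  set Cm : Set ℂ := {z | 0 < z.re ∧ z.im < 0} with hCm
  have cD0 : Convex ℝ D0 := (convex_halfSpace_re_gt 0).inter (convex_halfSpace_re_lt 1)
  have cD1 : Convex ℝ D1 := convex_halfSpace_re_gt 1
  have cCp : Convex ℝ Cp := (convex_halfSpace_re_gt 0).inter (convex_halfSpace_im_gt 0)
  have cCm : Convex ℝ Cm := (convex_halfSpace_re_gt 0).inter (convex_halfSpace_im_lt 0)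
  have m1 : (⟨1/2, 1/2⟩ : ℂ) ∈ D0 := by rw [hD0]; constructor <;> norm_num
  have m2 : (⟨1/2, 1/2⟩ : ℂ) ∈ Cp := by rw [hCp]; constructor <;> norm_num
  have m3 : (⟨2, 1⟩ : ℂ) ∈ Cp := by rw [hCp]; constructor <;> norm_num
  have m4 : (⟨2, 1⟩ : ℂ) ∈ D1 := by rw [hD1]; show (1:ℝ) < _; norm_num
  have m5 : (⟨1/2, -1/2⟩ : ℂ) ∈ D0 := by rw [hD0]; constructor <;> norm_num
  have m6 : (⟨1/2, -1/2⟩ : ℂ) ∈ Cm := by rw [hCm]; constructor <;> norm_num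
  have h1 : IsPreconnected (D0 ∪ Cp) :=
    IsPreconnected.union _ m1 m2 cD0.isPreconnected cCp.isPreconnected
  have h2 : IsPreconnected (D0 ∪ Cp ∪ D1) :=
    IsPreconnected.union _ (Or.inr m3) m4 h1 cD1.isPreconnected
  have h3 : IsPreconnected (D0 ∪ Cp ∪ D1 ∪ Cm) :=
    IsPreconnected.union _ (Or.inl (Or.inl m5)) m6 h2 cCm.isPreconnected
  have : {z : ℂ | 0 < z.re ∧ z ≠ 1} = D0 ∪ Cp ∪ D1 ∪ Cm := by
    ext z
    simp only [hD0, hD1, hCp, hCm, Set.mem_union, Set.mem_setOf_eq]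
    constructor
    · rintro ⟨hre, hne⟩
      rcases lt_trichotomy z.re 1 with h | h | h
      · exact Or.inl (Or.inl (Or.inl ⟨hre, h⟩))
      · rcases lt_trichotomy z.im 0 with h' | h' | h'
        · exact Or.inr ⟨hre, h'⟩
        · exact absurd (Complex.ext h (by simpa using h')) hne
        · exact Or.inl (Or.inl (Or.inr ⟨hre, h'⟩))
      · exact Or.inl (Or.inr h)
    · rintro (((⟨h1', h2'⟩ | ⟨h1', h2'⟩) | h') | ⟨h1', h2'⟩)
      · exact ⟨h1', fun he => by rw [he] at h2'; norm_num at h2'⟩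
      · exact ⟨h1', fun he => by rw [he] at h2'; norm_num at h2'⟩
      · exact ⟨by linarith, fun he => by rw [he] at h'; norm_num at h'⟩
      · exact ⟨h1', fun he => by rw [he] at h2'; norm_num at h2'⟩
  rw [this]
  exact h3

lemma etaF_eq {s : ℂ} (hs : 0 < s.re) (hs1 : s ≠ 1) :
    etaF s = (1 - 2 ^ ((1:ℂ) - s)) * riemannZeta s := by
  set U : Set ℂ := {z : ℂ | 0 < z.re ∧ z ≠ 1} with hU
  have hopen0 : IsOpen {z : ℂ | 0 < z.re} := isOpen_lt continuous_const Complex.continuous_re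
  have hopenU : IsOpen U := by
    have : U = {z : ℂ | 0 < z.re} ∩ {(1:ℂ)}ᶜ := by ext z; simp [hU, and_comm]
    rw [this]
    exact hopen0.inter (isOpen_compl_singleton)
  have hsub : U ⊆ {z : ℂ | 0 < z.re} := fun z hz => hz.1
  have hf : AnalyticOnNhd ℂ etaF U :=
    ((etaF_diff.mono hsub).analyticOnNhd hopenU)
  have hgdiff : DifferentiableOn ℂ (fun z => (1 - 2 ^ ((1:ℂ) - z)) * riemannZeta z) U := by
    intro z hz
    apply DifferentiableAt.differentiableWithinAt
    apply DifferentiableAt.mul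
    · apply DifferentiableAt.sub (differentiableAt_const _)
      exact ((differentiableAt_const _).sub differentiableAt_id).const_cpow (Or.inl (by norm_num))
    · exact differentiableAt_riemannZeta hz.2
  have hg : AnalyticOnNhd ℂ (fun z => (1 - 2 ^ ((1:ℂ) - z)) * riemannZeta z) U :=
    hgdiff.analyticOnNhd hopenU
  have h2mem : (2:ℂ) ∈ U := by constructor <;> norm_num
  have heq : etaF =ᶠ[nhds (2:ℂ)] (fun z => (1 - 2 ^ ((1:ℂ) - z)) * riemannZeta z) := by
    have hopen1 : IsOpen {z : ℂ | 1 < z.re} := isOpen_lt continuous_const Complex.continuous_re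
    filter_upwards [hopen1.mem_nhds (by norm_num : (2:ℂ) ∈ {z : ℂ | 1 < z.re})] with z hz
    exact etaF_eq_of_one_lt hz
  exact hf.eqOn_of_preconnected_of_eventuallyEq hg preconn_U h2mem heq ⟨hs, hs1⟩

theorem tendsto_eta_zeta {s : ℂ} (hs : 0 < s.re) (hs1 : s ≠ 1) :
    Tendsto (fun N : ℕ => ∑ n ∈ Finset.range N, (-1:ℂ)^n * ((n+1 : ℕ) : ℂ) ^ (-s))
      atTop (nhds ((1 - 2 ^ ((1:ℂ) - s)) * riemannZeta s)) := by
  have := tendsto_eta hs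
  rwa [etaF_eq hs hs1] at this

/-- Action of the supersymmetric partner Hamiltonian `H₋ = A†(ω) A(ω)` on `x^{-σ+iρ}`.
Here `g` is the result of applying `A(ω)` to `x^{-σ+iρ}` (defined for `y > 0` as the limit of
the partial sums), and the claim is that applying `A†(ω)` to `g` gives a convergent series
whose sum is
`(1 - 2^{σ-i(ρ-ω/2)})(1 - 2^{(1-σ)+i(ρ-ω/2)}) ζ(σ-i(ρ-ω/2)) ζ(1-σ+i(ρ-ω/2)) x^{-σ+iρ}`. -/
theorem Hminus_action (σ ρ ω : ℝ) (h0 : 0 < σ) (h1 : σ < 1) (g : ℝ → ℂ)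
    (hg : ∀ y : ℝ, 0 < y →
      Filter.Tendsto
        (fun N : ℕ => (y : ℂ) ^ (-(Complex.I * (ω : ℂ)) / 2) *
          ∑ n ∈ Finset.range N, (-1 : ℂ) ^ n *
            ((((n + 1 : ℕ) : ℝ) * y : ℝ) : ℂ) ^ (-(Complex.I * (ω : ℂ)) / 2) *
            ((((n + 1 : ℕ) : ℝ) * y : ℝ) : ℂ) ^ (-(σ : ℂ) + Complex.I * (ρ : ℂ)))
        Filter.atTop (nhds (g y)))
    (x : ℝ) (hx : 0 < x) :
    Filter.Tendsto
      (fun N : ℕ => (x : ℂ) ^ (Complex.I * (ω : ℂ) / 2) *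
        ∑ m ∈ Finset.range N, (-1 : ℂ) ^ m * ((m + 1 : ℕ) : ℂ)⁻¹ *
          (((x / ((m + 1 : ℕ) : ℝ)) : ℝ) : ℂ) ^ (Complex.I * (ω : ℂ) / 2) *
          g (x / ((m + 1 : ℕ) : ℝ)))
      Filter.atTop
      (nhds ((1 - (2 : ℂ) ^ ((σ : ℂ) - Complex.I * ((ρ : ℂ) - (ω : ℂ) / 2))) *
        (1 - (2 : ℂ) ^ ((1 - (σ : ℂ)) + Complex.I * ((ρ : ℂ) - (ω : ℂ) / 2))) *
        riemannZeta ((σ : ℂ) - Complex.I * ((ρ : ℂ) - (ω : ℂ) / 2)) *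
        riemannZeta (1 - (σ : ℂ) + Complex.I * ((ρ : ℂ) - (ω : ℂ) / 2)) *
        (x : ℂ) ^ (-(σ : ℂ) + Complex.I * (ρ : ℂ)))) := by
  set s₁ : ℂ := (σ:ℂ) - Complex.I * ((ρ:ℂ) - (ω:ℂ)/2) with hs₁
  set s₂ : ℂ := 1 - (σ:ℂ) + Complex.I * ((ρ:ℂ) - (ω:ℂ)/2) with hs₂
  have hs₁re : s₁.re = σ := by simp [hs₁]
  have hs₂re : s₂.re = 1 - σ := by simp [hs₂]
  have hs₁0 : 0 < s₁.re := by rw [hs₁re]; exact h0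
  have hs₂0 : 0 < s₂.re := by rw [hs₂re]; linarith
  have hs₁1 : s₁ ≠ 1 := by
    intro h; rw [h] at hs₁re; simp at hs₁re; linarith
  have hs₂1 : s₂ ≠ 1 := by
    intro h; rw [h] at hs₂re; simp at hs₂re; linarith
  set E₁ : ℂ := (1 - (2:ℂ) ^ ((1:ℂ) - s₁)) * riemannZeta s₁ with hE₁
  set E₂ : ℂ := (1 - (2:ℂ) ^ ((1:ℂ) - s₂)) * riemannZeta s₂ with hE₂
  set c : ℂ := -(Complex.I * (ω : ℂ)) / 2 with hc
  -- Step 1: identify g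
  have hgval : ∀ y : ℝ, 0 < y → g y = (y:ℂ) ^ c * (y:ℂ) ^ (-s₁) * E₁ := by
    intro y hy
    have hyne : (y:ℂ) ≠ 0 := Complex.ofReal_ne_zero.mpr (ne_of_gt hy)
    have hterm : ∀ n : ℕ,
        (-1:ℂ)^n * ((((n+1:ℕ):ℝ) * y : ℝ):ℂ) ^ c *
          ((((n+1:ℕ):ℝ) * y : ℝ):ℂ) ^ (-(σ:ℂ) + Complex.I * (ρ:ℂ))
        = ((-1:ℂ)^n * ((n+1:ℕ):ℂ) ^ (-s₁)) * (y:ℂ) ^ (-s₁) := by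
      intro n
      have hbase : ((((n+1:ℕ):ℝ) * y : ℝ):ℂ) ≠ 0 :=
        Complex.ofReal_ne_zero.mpr (by positivity)
      rw [mul_assoc, ← Complex.cpow_add _ _ hbase]
      have he : c + (-(σ:ℂ) + Complex.I * (ρ:ℂ)) = -s₁ := by rw [hc, hs₁]; ring
      rw [he, Complex.ofReal_mul, mul_cpow_ofReal_nonneg (Nat.cast_nonneg _) hy.le]
      have : ((((n+1:ℕ):ℝ)):ℂ) = ((n+1:ℕ):ℂ) := by norm_cast
      rw [this]
      ring
    have hsum : ∀ N : ℕ,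
        (y:ℂ) ^ c * ∑ n ∈ Finset.range N, (-1:ℂ)^n *
            ((((n+1:ℕ):ℝ) * y : ℝ):ℂ) ^ c *
            ((((n+1:ℕ):ℝ) * y : ℝ):ℂ) ^ (-(σ:ℂ) + Complex.I * (ρ:ℂ))
        = ((y:ℂ) ^ c * (y:ℂ) ^ (-s₁)) *
            ∑ n ∈ Finset.range N, (-1:ℂ)^n * ((n+1:ℕ):ℂ) ^ (-s₁) := by
      intro N
      rw [Finset.sum_congr rfl (fun n _ => hterm n), ← Finset.sum_mul]
      ring
    have hT : Filter.Tendsto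
        (fun N : ℕ => (y:ℂ) ^ c * ∑ n ∈ Finset.range N, (-1:ℂ)^n *
            ((((n+1:ℕ):ℝ) * y : ℝ):ℂ) ^ c *
            ((((n+1:ℕ):ℝ) * y : ℝ):ℂ) ^ (-(σ:ℂ) + Complex.I * (ρ:ℂ)))
        Filter.atTop (nhds ((y:ℂ) ^ c * (y:ℂ) ^ (-s₁) * E₁)) := by
      have := (tendsto_eta_zeta hs₁0 hs₁1).const_mul ((y:ℂ) ^ c * (y:ℂ) ^ (-s₁))
      simp only [← hsum] at this
      rw [hE₁]
      convert this using 2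
    exact tendsto_nhds_unique (hg y hy) hT
  -- Step 2: outer sum
  have houter : ∀ m : ℕ,
      (-1:ℂ)^m * ((m+1:ℕ):ℂ)⁻¹ * (((x / ((m+1:ℕ):ℝ)) : ℝ):ℂ) ^ (Complex.I * (ω:ℂ) / 2) *
        g (x / ((m+1:ℕ):ℝ))
      = ((-1:ℂ)^m * ((m+1:ℕ):ℂ) ^ (-s₂)) * ((x:ℂ) ^ (-s₁) * E₁) := by
    intro m
    have hm : (0:ℝ) < ((m+1:ℕ):ℝ) := by positivity
    have hy : (0:ℝ) < x / ((m+1:ℕ):ℝ) := by positivity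
    rw [hgval _ hy]
    have hyne : (((x / ((m+1:ℕ):ℝ)) : ℝ):ℂ) ≠ 0 := Complex.ofReal_ne_zero.mpr (ne_of_gt hy)
    have hcancel : (((x / ((m+1:ℕ):ℝ)) : ℝ):ℂ) ^ (Complex.I * (ω:ℂ) / 2) *
        (((x / ((m+1:ℕ):ℝ)) : ℝ):ℂ) ^ c = 1 := by
      rw [← Complex.cpow_add _ _ hyne]
      have : Complex.I * (ω:ℂ) / 2 + c = 0 := by rw [hc]; ring
      rw [this, Complex.cpow_zero]
    have hsplit : (((x / ((m+1:ℕ):ℝ)) : ℝ):ℂ) ^ (-s₁)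
        = (x:ℂ) ^ (-s₁) * (((m+1:ℕ):ℂ)) ^ s₁ := by
      have e1 : (x / ((m+1:ℕ):ℝ) : ℝ) = x * (((m+1:ℕ):ℝ))⁻¹ := by ring
      rw [e1, Complex.ofReal_mul, mul_cpow_ofReal_nonneg hx.le (by positivity)]
      congr 1
      rw [Complex.ofReal_inv]
      rw [Complex.inv_cpow _ _ (by
        rw [Complex.arg_ofReal_of_nonneg (le_of_lt hm)]
        exact Real.pi_ne_zero.symm), Complex.cpow_neg]
      rw [inv_inv]
      norm_cast
    have hinv : ((m+1:ℕ):ℂ)⁻¹ * ((m+1:ℕ):ℂ) ^ s₁ = ((m+1:ℕ):ℂ) ^ (-s₂) := by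
      have hne : ((m+1:ℕ):ℂ) ≠ 0 := Nat.cast_ne_zero.mpr (by omega)
      rw [← Complex.cpow_neg_one, ← Complex.cpow_add _ _ hne]
      congr 1
      rw [hs₁, hs₂]; ring
    calc (-1:ℂ)^m * ((m+1:ℕ):ℂ)⁻¹ * (((x / ((m+1:ℕ):ℝ)) : ℝ):ℂ) ^ (Complex.I * (ω:ℂ) / 2) *
          ((((x / ((m+1:ℕ):ℝ)) : ℝ):ℂ) ^ c * (((x / ((m+1:ℕ):ℝ)) : ℝ):ℂ) ^ (-s₁) * E₁)
        = ((-1:ℂ)^m * (((m+1:ℕ):ℂ)⁻¹ * (((x / ((m+1:ℕ):ℝ)) : ℝ):ℂ) ^ (-s₁))) *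
            ((((x / ((m+1:ℕ):ℝ)) : ℝ):ℂ) ^ (Complex.I * (ω:ℂ) / 2) *
              (((x / ((m+1:ℕ):ℝ)) : ℝ):ℂ) ^ c) * E₁ := by ring
      _ = ((-1:ℂ)^m * (((m+1:ℕ):ℂ)⁻¹ * ((x:ℂ) ^ (-s₁) * ((m+1:ℕ):ℂ) ^ s₁))) * E₁ := by
          rw [hcancel, hsplit]; ring
      _ = ((-1:ℂ)^m * ((((m+1:ℕ):ℂ)⁻¹ * ((m+1:ℕ):ℂ) ^ s₁) * (x:ℂ) ^ (-s₁))) * E₁ := by ring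
      _ = ((-1:ℂ)^m * ((m+1:ℕ):ℂ) ^ (-s₂)) * ((x:ℂ) ^ (-s₁) * E₁) := by rw [hinv]; ring
  have hsum2 : ∀ N : ℕ,
      (x:ℂ) ^ (Complex.I * (ω:ℂ) / 2) *
        ∑ m ∈ Finset.range N, (-1:ℂ)^m * ((m+1:ℕ):ℂ)⁻¹ *
          (((x / ((m+1:ℕ):ℝ)) : ℝ):ℂ) ^ (Complex.I * (ω:ℂ) / 2) * g (x / ((m+1:ℕ):ℝ))
      = ((x:ℂ) ^ (Complex.I * (ω:ℂ) / 2) * ((x:ℂ) ^ (-s₁) * E₁)) *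
          ∑ m ∈ Finset.range N, (-1:ℂ)^m * ((m+1:ℕ):ℂ) ^ (-s₂) := by
    intro N
    rw [Finset.sum_congr rfl (fun m _ => houter m), ← Finset.sum_mul]
    ring
  have hT2 := (tendsto_eta_zeta hs₂0 hs₂1).const_mul
    ((x:ℂ) ^ (Complex.I * (ω:ℂ) / 2) * ((x:ℂ) ^ (-s₁) * E₁))
  simp only [← hsum2] at hT2
  convert hT2 using 2
  have hxne : (x:ℂ) ≠ 0 := Complex.ofReal_ne_zero.mpr (ne_of_gt hx)
  have hxpow : (x:ℂ) ^ (Complex.I * (ω:ℂ) / 2) * (x:ℂ) ^ (-s₁)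
      = (x:ℂ) ^ (-(σ:ℂ) + Complex.I * (ρ:ℂ)) := by
    rw [← Complex.cpow_add _ _ hxne]
    congr 1
    rw [hs₁]; ring
  have e1 : (1:ℂ) - s₁ = s₂ := by rw [hs₁, hs₂]; ring
  have e2 : (1:ℂ) - s₂ = s₁ := by rw [hs₁, hs₂]; ring
  rw [hE₁, e1, e2, ← hxpow]
  ring
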